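/- If p1 = x^σ(1-x)^τ and p2 = x^α(1-x)^β are pseudomonomials in a pseudomonomial ideal I of F2[x_1,...,x_n], and e ∈ σ ∩ β, then the pseudomonomial x^{(σ∪α)\e}(1-x)^{(τ∪β)\e} also lies in I. (Weak elimination for pseudomonomials.) -/
import Mathlib


open MvPolynomial

/-- The pseudomonomial `x^σ (1-x)^τ` in `𝔽₂[x_1,…,x_n]`. -/
noncomputable def pseudomonomial {n : ℕ} (σ τ : Finset (Fin n)) :
    MvPolynomial (Fin n) (ZMod 2) :=
  (∏ i ∈ σ, X i) * ∏ j ∈ τ, (1 - X j)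

/-- Weak elimination for pseudomonomials in an ideal. -/
theorem stmt0 {n : ℕ} (I : Ideal (MvPolynomial (Fin n) (ZMod 2)))
    (σ τ α β : Finset (Fin n)) (hστ : Disjoint σ τ) (hαβ : Disjoint α β)
    (e : Fin n) (heσ : e ∈ σ) (heβ : e ∈ β)
    (h1 : pseudomonomial σ τ ∈ I) (h2 : pseudomonomial α β ∈ I) :
    pseudomonomial ((σ ∪ α).erase e) ((τ ∪ β).erase e) ∈ I := by
  have heτ : e ∉ τ := Finset.disjoint_left.mp hστ heσ
  have heα : e ∉ α := Finset.disjoint_right.mp hαβ heβ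
  have key :
      pseudomonomial ((σ ∪ α).erase e) ((τ ∪ β).erase e)
        = ((∏ i ∈ α \ σ, X i) * ∏ j ∈ (β \ τ).erase e, (1 - X j)) * pseudomonomial σ τ
          + ((∏ i ∈ (σ \ α).erase e, X i) * ∏ j ∈ τ \ β, (1 - X j))
            * pseudomonomial α β := by
    unfold pseudomonomial
    have hx1 : (∏ i ∈ σ, (X i : MvPolynomial (Fin n) (ZMod 2)))
        * (∏ i ∈ α \ σ, X i) = ∏ i ∈ σ ∪ α, X i := by
      rw [← Finset.prod_union Finset.disjoint_sdiff, Finset.union_sdiff_self_eq_union]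
    have hs1 : τ ∪ (β \ τ).erase e = (τ ∪ β).erase e := by
      ext x
      simp only [Finset.mem_union, Finset.mem_erase, Finset.mem_sdiff]
      constructor
      · rintro (hx | ⟨hne, hβ, hτ⟩)
        · exact ⟨fun h => heτ (h ▸ hx), Or.inl hx⟩
        · exact ⟨hne, Or.inr hβ⟩
      · rintro ⟨hne, hx | hx⟩
        · exact Or.inl hx
        · by_cases hτ : x ∈ τ
          · exact Or.inl hτ
          · exact Or.inr ⟨hne, hx, hτ⟩
    have hy1 : (∏ j ∈ τ, (1 - X j : MvPolynomial (Fin n) (ZMod 2)))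
        * (∏ j ∈ (β \ τ).erase e, (1 - X j)) = ∏ j ∈ (τ ∪ β).erase e, (1 - X j) := by
      rw [← Finset.prod_union (Finset.disjoint_sdiff.mono_right (Finset.erase_subset _ _)), hs1]
    have hs2 : α ∪ (σ \ α).erase e = (σ ∪ α).erase e := by
      ext x
      simp only [Finset.mem_union, Finset.mem_erase, Finset.mem_sdiff]
      constructor
      · rintro (hx | ⟨hne, hσ, hα⟩)
        · exact ⟨fun h => heα (h ▸ hx), Or.inr hx⟩
        · exact ⟨hne, Or.inl hσ⟩
      · rintro ⟨hne, hx | hx⟩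
        · by_cases hα : x ∈ α
          · exact Or.inl hα
          · exact Or.inr ⟨hne, hx, hα⟩
        · exact Or.inl hx
    have hx2 : (∏ i ∈ α, (X i : MvPolynomial (Fin n) (ZMod 2)))
        * (∏ i ∈ (σ \ α).erase e, X i) = ∏ i ∈ (σ ∪ α).erase e, X i := by
      rw [← Finset.prod_union (Finset.disjoint_sdiff.mono_right (Finset.erase_subset _ _)), hs2]
    have hy2 : (∏ j ∈ β, (1 - X j : MvPolynomial (Fin n) (ZMod 2)))
        * (∏ j ∈ τ \ β, (1 - X j)) = ∏ j ∈ τ ∪ β, (1 - X j) := by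
      rw [← Finset.prod_union Finset.disjoint_sdiff, Finset.union_sdiff_self_eq_union,
        Finset.union_comm]
    have he1 : (∏ i ∈ σ ∪ α, (X i : MvPolynomial (Fin n) (ZMod 2)))
        = X e * ∏ i ∈ (σ ∪ α).erase e, X i :=
      (Finset.mul_prod_erase _ _ (Finset.mem_union_left _ heσ)).symm
    have he2 : (∏ j ∈ τ ∪ β, (1 - X j : MvPolynomial (Fin n) (ZMod 2)))
        = (1 - X e) * ∏ j ∈ (τ ∪ β).erase e, (1 - X j) :=
      (Finset.mul_prod_erase _ _ (Finset.mem_union_right _ heβ)).symm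
    calc (∏ i ∈ (σ ∪ α).erase e, (X i : MvPolynomial (Fin n) (ZMod 2)))
          * ∏ j ∈ (τ ∪ β).erase e, (1 - X j)
        = X e * ((∏ i ∈ (σ ∪ α).erase e, X i) * ∏ j ∈ (τ ∪ β).erase e, (1 - X j))
          + (1 - X e)
            * ((∏ i ∈ (σ ∪ α).erase e, X i) * ∏ j ∈ (τ ∪ β).erase e, (1 - X j)) := by
          ring
      _ = ((∏ i ∈ σ, X i) * ∏ i ∈ α \ σ, X i)
            * ((∏ j ∈ τ, (1 - X j)) * ∏ j ∈ (β \ τ).erase e, (1 - X j))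
          + ((∏ i ∈ α, X i) * ∏ i ∈ (σ \ α).erase e, X i)
            * ((∏ j ∈ β, (1 - X j)) * ∏ j ∈ τ \ β, (1 - X j)) := by
          rw [hx1, hy1, hx2, hy2, he1, he2]; ring
      _ = _ := by ring
  rw [key]
  exact I.add_mem (I.mul_mem_left _ h1) (I.mul_mem_left _ h2)
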